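/- For multiplicatively dependent bases b and c (i.e., b^k = c^l for some positive integers k, l), every b-recognisable set of natural numbers is c-recognisable. -/

import Mathlib

/-- Value of a word of digits, read least-significant-digit-first. -/
def wordVal (b : ℕ) : List ℕ → ℕ
  | [] => 0
  | a :: u => a + b * wordVal b u

/-- A language is regular if it is accepted by a DFA with finitely many states. -/
def IsRegularLang {α : Type} (L : Language α) : Prop :=
  ∃ (σ : Type) (_ : Fintype σ) (M : DFA α σ), M.accepts = L

/-- A set `E ⊆ ℕ` is `b`-recognisable if the language of base-`b`
representations of its elements (least-significant-digit-first words over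
`{0,…,b-1}` not ending with `0`) is regular. -/
def BRecognisable (b : ℕ) (E : Set ℕ) : Prop :=
  IsRegularLang {w : List ℕ |
    (∀ d ∈ w, d < b) ∧ wordVal b w ∈ E ∧ w.getLast? ≠ some 0}

namespace BaseChangeAux

/-- Left quotient of a language by a word. -/
def LQ {α : Type} (L : Language α) (u : List α) : Language α := {v | u ++ v ∈ L}

lemma mem_LQ {α : Type} {L : Language α} {u v : List α} : v ∈ LQ L u ↔ u ++ v ∈ L :=
  Iff.rfl

/-- Necessity direction of Myhill–Nerode: a regular language has finitely many
left quotients. -/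
lemma finite_range_LQ {α : Type} {L : Language α} (h : IsRegularLang L) :
    (Set.range (LQ L)).Finite := by
  obtain ⟨σ, fin, M, hM⟩ := h
  have hsub : Set.range (LQ L) ⊆ (fun s : σ => M.acceptsFrom s) '' Set.univ := by
    rintro _ ⟨u, rfl⟩
    refine ⟨M.eval u, trivial, ?_⟩
    ext v
    rw [DFA.mem_acceptsFrom, mem_LQ, ← hM, DFA.mem_accepts]
    show M.evalFrom (M.evalFrom M.start u) v ∈ M.accept ↔ M.evalFrom M.start (u ++ v) ∈ M.accept
    rw [DFA.evalFrom_of_append]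
  exact (Set.finite_univ.image _).subset hsub

/-- Sufficiency direction of Myhill–Nerode: finitely many left quotients
implies regularity. -/
lemma regular_of_finite_range_LQ {α : Type} {L : Language α}
    (h : (Set.range (LQ L)).Finite) : IsRegularLang L := by
  classical
  have hfin : Finite (Set.range (LQ L)) := h
  refine ⟨Set.range (LQ L), Fintype.ofFinite _, ?_, ?_⟩
  · exact
      { step := fun Q a => ⟨{v | a :: v ∈ (Q : Language α)}, by
          obtain ⟨u, hu⟩ := Q.2
          refine ⟨u ++ [a], ?_⟩
          ext v
          show (u ++ [a]) ++ v ∈ L ↔ a :: v ∈ (Q : Language α)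
          rw [← hu, List.append_assoc, List.singleton_append]
          exact Iff.rfl⟩
        start := ⟨LQ L [], ⟨[], rfl⟩⟩
        accept := {Q | [] ∈ (Q : Language α)} }
  · set M : DFA α (Set.range (LQ L)) :=
      { step := fun Q a => ⟨{v | a :: v ∈ (Q : Language α)}, by
          obtain ⟨u, hu⟩ := Q.2
          refine ⟨u ++ [a], ?_⟩
          ext v
          show (u ++ [a]) ++ v ∈ L ↔ a :: v ∈ (Q : Language α)
          rw [← hu, List.append_assoc, List.singleton_append]
          exact Iff.rfl⟩
        start := ⟨LQ L [], ⟨[], rfl⟩⟩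
        accept := {Q | [] ∈ (Q : Language α)} } with hMdef
    have key : ∀ u : List α, M.eval u = ⟨LQ L u, ⟨u, rfl⟩⟩ := by
      intro u
      induction u using List.reverseRecOn with
      | nil => rfl
      | append_singleton u a ih =>
          rw [DFA.eval_append_singleton, ih]
          apply Subtype.ext
          show {v | a :: v ∈ LQ L u} = LQ L (u ++ [a])
          ext v
          show a :: v ∈ LQ L u ↔ (u ++ [a]) ++ v ∈ L
          rw [mem_LQ, List.append_assoc, List.singleton_append]
    ext w
    rw [DFA.mem_accepts, key w]
    show ([] ∈ LQ L w) ↔ w ∈ L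
    rw [mem_LQ, List.append_nil]

/-- The language of base-`b` representations of elements of `E`. -/
def Lang (b : ℕ) (E : Set ℕ) : Language ℕ :=
  {w : List ℕ | (∀ d ∈ w, d < b) ∧ wordVal b w ∈ E ∧ w.getLast? ≠ some 0}

lemma wordVal_append (b : ℕ) (u v : List ℕ) :
    wordVal b (u ++ v) = wordVal b u + b ^ u.length * wordVal b v := by
  induction u with
  | nil => simp [wordVal]
  | cons a u ih =>
      show a + b * wordVal b (u ++ v) = (a + b * wordVal b u) + b ^ (a :: u).length * wordVal b v
      rw [ih, List.length_cons, pow_succ]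
      ring

lemma wordVal_lt_pow {b : ℕ} (hb : 1 ≤ b) {w : List ℕ} (hw : ∀ d ∈ w, d < b) :
    wordVal b w < b ^ w.length := by
  induction w with
  | nil => simp [wordVal]
  | cons a u ih =>
      have ha : a < b := hw a List.mem_cons_self
      have hu : wordVal b u < b ^ u.length := ih fun d hd => hw d (List.mem_cons_of_mem a hd)
      have h1 : a + b * wordVal b u < b * (1 + wordVal b u) := by
        rw [Nat.mul_add, Nat.mul_one]; omega
      have h2 : b * (1 + wordVal b u) ≤ b * b ^ u.length := by
        exact Nat.mul_le_mul_left b (by omega)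
      calc wordVal b (a :: u) = a + b * wordVal b u := rfl
        _ < b * b ^ u.length := lt_of_lt_of_le h1 h2
        _ = b ^ (a :: u).length := by rw [List.length_cons, pow_succ]; ring

lemma wordVal_eq_ofDigits (b : ℕ) (w : List ℕ) : wordVal b w = Nat.ofDigits b w := by
  induction w with
  | nil => simp [wordVal, Nat.ofDigits]
  | cons a u ih => simp [wordVal, Nat.ofDigits, ih]

lemma wordVal_digits (b n : ℕ) : wordVal b (Nat.digits b n) = n := by
  rw [wordVal_eq_ofDigits, Nat.ofDigits_digits]

lemma wordVal_replicate_zero (b m : ℕ) : wordVal b (List.replicate m 0) = 0 := by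
  induction m with
  | zero => rfl
  | succ m ih => simp [List.replicate_succ, wordVal, ih]

lemma digits_getLast?_ne_zero {b n : ℕ} (hn : n ≠ 0) :
    (Nat.digits b n).getLast? ≠ some 0 := by
  have hne : Nat.digits b n ≠ [] := Nat.digits_ne_nil_iff_ne_zero.mpr hn
  rw [List.getLast?_eq_getLast hne]
  intro h
  exact Nat.getLast_digit_ne_zero b hn (Option.some.inj h)

lemma digits_len_le {b r j : ℕ} (hb : 2 ≤ b) (hr : r < b ^ j) :
    (Nat.digits b r).length ≤ j := by
  rcases eq_or_ne r 0 with rfl | hr0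
  · simp
  · rw [Nat.digits_len b r (by omega) hr0]
    have := (Nat.log_lt_iff_lt_pow (by omega : 1 < b) hr0).mpr hr
    omega

/-- Step 1: the family of sets `{n | r + b^j * n ∈ E}` with `r < b^j` is finite,
provided `E` is `b`-recognisable. -/
lemma finite_SCol_of_recognisable {b : ℕ} {E : Set ℕ} (hb : 2 ≤ b)
    (hE : IsRegularLang (Lang b E)) :
    {S : Set ℕ | ∃ j r : ℕ, r < b ^ j ∧ S = {n | r + b ^ j * n ∈ E}}.Finite := by
  classical
  have hfin := finite_range_LQ hE
  set Φ : Language ℕ × Prop → Set ℕ := fun p =>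
    {n | (n = 0 ∧ p.2) ∨ (n ≠ 0 ∧ Nat.digits b n ∈ p.1)} with hΦ
  have hsub : {S : Set ℕ | ∃ j r : ℕ, r < b ^ j ∧ S = {n | r + b ^ j * n ∈ E}} ⊆
      Φ '' ((Set.range (LQ (Lang b E))) ×ˢ (Set.univ : Set Prop)) := by
    rintro S ⟨j, r, hr, rfl⟩
    set u : List ℕ := Nat.digits b r ++ List.replicate (j - (Nat.digits b r).length) 0 with hu
    have hlen : u.length = j := by
      have := digits_len_le hb hr
      simp only [hu, List.length_append, List.length_replicate]
      omega
    have hval : wordVal b u = r := by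
      rw [hu, wordVal_append, wordVal_replicate_zero, wordVal_digits, Nat.mul_zero, Nat.add_zero]
    have hdig : ∀ d ∈ u, d < b := by
      intro d hd
      rcases List.mem_append.mp hd with h | h
      · exact Nat.digits_lt_base (by omega) h
      · rw [List.eq_of_mem_replicate h]; omega
    refine ⟨(LQ (Lang b E) u, r ∈ E), ⟨⟨u, rfl⟩, trivial⟩, ?_⟩
    have heq : {n | r + b ^ j * n ∈ E} = Φ (LQ (Lang b E) u, r ∈ E) := ?_
    · exact heq.symm
    ext n
    rcases eq_or_ne n 0 with rfl | hn0
    · simp [hΦ]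
    · have hdne : Nat.digits b n ≠ [] := Nat.digits_ne_nil_iff_ne_zero.mpr hn0
      have hΦn : (n ∈ Φ (LQ (Lang b E) u, r ∈ E)) ↔
          Nat.digits b n ∈ LQ (Lang b E) u := by
        simp [hΦ, hn0]
      rw [Set.mem_setOf_eq, hΦn, mem_LQ]
      constructor
      · intro hmem
        refine ⟨?_, ?_, ?_⟩
        · intro d hd
          rcases List.mem_append.mp hd with h | h
          · exact hdig d h
          · exact Nat.digits_lt_base (by omega) h
        · rw [wordVal_append, hval, hlen, wordVal_digits]
          exact hmem
        · rw [List.getLast?_append_of_ne_nil _ hdne]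
          exact digits_getLast?_ne_zero hn0
      · rintro ⟨_, hv, _⟩
        rw [wordVal_append, hval, hlen, wordVal_digits] at hv
        exact hv
  exact ((hfin.prod (Set.finite_univ : (Set.univ : Set Prop).Finite)).image Φ).subset hsub

end BaseChangeAux

open BaseChangeAux in
/-- For multiplicatively dependent bases `b` and `c` (`b^k = c^l` with
`k, l ≥ 1`), every `b`-recognisable set is `c`-recognisable. -/
theorem brecognisable_of_mult_dependent (b c k l : ℕ) (hb : 2 ≤ b) (hc : 2 ≤ c)
    (hk : 1 ≤ k) (hl : 1 ≤ l) (hdep : b ^ k = c ^ l)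
    (E : Set ℕ) (hE : BRecognisable b E) : BRecognisable c E := by
  classical
  have hE' : IsRegularLang (Lang b E) := hE
  have hS1 := finite_SCol_of_recognisable hb hE'
  -- Step 2: the analogous family in base `c` is finite.
  have hS2 : {S : Set ℕ | ∃ j r : ℕ, r < c ^ j ∧ S = {n | r + c ^ j * n ∈ E}}.Finite := by
    set Ψ : Set ℕ × (ℕ × ℕ) → Set ℕ := fun p => {n | p.2.1 + c ^ p.2.2 * n ∈ p.1} with hΨ
    have hsub : {S : Set ℕ | ∃ j r : ℕ, r < c ^ j ∧ S = {n | r + c ^ j * n ∈ E}} ⊆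
        Ψ '' ({S : Set ℕ | ∃ j r : ℕ, r < b ^ j ∧ S = {n | r + b ^ j * n ∈ E}} ×ˢ
          (Set.Iio (c ^ l) ×ˢ Set.Iio l)) := by
      rintro S ⟨j, r, hr, rfl⟩
      set s := j % l with hs
      set q := j / l with hq
      have hsl : s < l := Nat.mod_lt _ (by omega)
      set A := b ^ (k * q) with hA
      have hA0 : 0 < A := pow_pos (by omega) _
      have hcj : c ^ j = c ^ s * A := by
        have hj : j = l * q + s := (Nat.div_add_mod j l).symm ▸ by omega
        rw [hA, pow_mul, hdep, hj, pow_add, pow_mul]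
        ring
      set r1 := r % A with hr1
      set r2 := r / A with hr2
      have hr1A : r1 < A := Nat.mod_lt _ hA0
      have hrdecomp : r = r1 + A * r2 := (Nat.mod_add_div r A).symm
      have hr2cs : r2 < c ^ s := by
        rw [hr2]
        rw [Nat.div_lt_iff_lt_mul hA0]
        calc r < c ^ j := hr
          _ = c ^ s * A := hcj
      have hr2cl : r2 < c ^ l :=
        lt_of_lt_of_le hr2cs (Nat.pow_le_pow_right (by omega) (le_of_lt hsl))
      refine ⟨({n | r1 + A * n ∈ E}, (r2, s)), ⟨⟨k * q, r1, hr1A, rfl⟩, hr2cl, hsl⟩, ?_⟩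
      ext n
      simp only [hΨ, Set.mem_setOf_eq]
      have harith : r1 + A * (r2 + c ^ s * n) = r + c ^ j * n := by
        rw [hrdecomp, hcj]; ring
      rw [harith]
  -- parameter set is finite
    have hpar : ((Set.Iio (c ^ l) : Set ℕ) ×ˢ (Set.Iio l : Set ℕ)).Finite :=
      (Set.finite_Iio _).prod (Set.finite_Iio _)
    exact ((hS1.prod hpar).image Ψ).subset hsub
  -- Step 3: the base-`c` language has finitely many left quotients.
  have hfinc : (Set.range (LQ (Lang c E))).Finite := by
    set Θ : Set ℕ × Prop → Language ℕ := fun p =>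
      {v : List ℕ | (∀ d ∈ v, d < c) ∧ wordVal c v ∈ p.1 ∧
        (if v = [] then p.2 else v.getLast? ≠ some 0)} with hΘ
    have hsub : Set.range (LQ (Lang c E)) ⊆
        insert (0 : Language ℕ)
          (Θ '' ({S : Set ℕ | ∃ j r : ℕ, r < c ^ j ∧ S = {n | r + c ^ j * n ∈ E}} ×ˢ
            (Set.univ : Set Prop))) := by
      rintro _ ⟨u, rfl⟩
      by_cases hu : ∀ d ∈ u, d < c
      · refine Set.mem_insert_of_mem _ ?_
        have hval : wordVal c u < c ^ u.length := wordVal_lt_pow (by omega) hu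
        refine ⟨({n | wordVal c u + c ^ u.length * n ∈ E}, u.getLast? ≠ some 0),
          ⟨⟨u.length, wordVal c u, hval, rfl⟩, trivial⟩, ?_⟩
        have heq : LQ (Lang c E) u =
            Θ ({n | wordVal c u + c ^ u.length * n ∈ E}, u.getLast? ≠ some 0) := ?_
        · exact heq.symm
        ext v
        show ((∀ d ∈ u ++ v, d < c) ∧ wordVal c (u ++ v) ∈ E ∧
            (u ++ v).getLast? ≠ some 0) ↔
          ((∀ d ∈ v, d < c) ∧ wordVal c u + c ^ u.length * wordVal c v ∈ E ∧
            (if v = [] then u.getLast? ≠ some 0 else v.getLast? ≠ some 0))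
        constructor
        · rintro ⟨hd, hv, hlast⟩
          refine ⟨fun d hdv => hd d (List.mem_append.mpr (Or.inr hdv)), ?_, ?_⟩
          · rw [wordVal_append] at hv
            exact hv
          · by_cases hvnil : v = []
            · subst hvnil
              rw [List.append_nil] at hlast
              simpa using hlast
            · rw [List.getLast?_append_of_ne_nil _ hvnil] at hlast
              simp [hvnil, hlast]
        · rintro ⟨hdv, hv, hlast⟩
          refine ⟨?_, ?_, ?_⟩
          · intro d hd
            rcases List.mem_append.mp hd with h | h
            · exact hu d h
            · exact hdv d h
          · rw [wordVal_append]
            exact hv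
          · by_cases hvnil : v = []
            · subst hvnil
              rw [List.append_nil]
              simpa using hlast
            · rw [List.getLast?_append_of_ne_nil _ hvnil]
              simpa [hvnil] using hlast
      · refine Set.mem_insert_iff.mpr (Or.inl ?_)
        ext v
        constructor
        · intro hmem
          exfalso
          rw [mem_LQ] at hmem
          obtain ⟨hd, _, _⟩ := hmem
          exact hu fun d hdu => hd d (List.mem_append.mpr (Or.inl hdu))
        · intro hmem
          exact absurd hmem (Language.notMem_zero v)
    exact (((hS2.prod Set.finite_univ).image Θ).insert 0).subset hsub
  exact regular_of_finite_range_LQ hfinc
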